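/- For every real q ≥ 2 and all reals p, h with 0 ≤ p < h, the function Φ(x) = (x^q − p^q)^(1/q) is differentiable at h with Φ′(h) = (1 − (p/h)^q)^(1/q − 1), and moreover Φ′(h) − 1 ≥ (1 − 1/q)·(p/h)^q ≥ 0. -/

import Mathlib

open Real

/-- For every real `q ≥ 2` and all reals `p, h` with `0 ≤ p < h`, the
function `Φ(x) = (x^q − p^q)^(1/q)` is differentiable at `h` with
`Φ′(h) = (1 − (p/h)^q)^(1/q − 1)`, and moreover
`Φ′(h) − 1 ≥ (1 − 1/q)·(p/h)^q ≥ 0`. -/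
theorem stmt_6 (q : ℝ) (hq : 2 ≤ q) (p h : ℝ) (hp : 0 ≤ p) (hph : p < h) :
    HasDerivAt (fun x : ℝ => (x ^ q - p ^ q) ^ (1 / q))
      ((1 - (p / h) ^ q) ^ (1 / q - 1)) h ∧
    (1 - 1 / q) * (p / h) ^ q ≤ (1 - (p / h) ^ q) ^ (1 / q - 1) - 1 ∧
    0 ≤ (1 - 1 / q) * (p / h) ^ q := by
  have hq0 : 0 < q := by linarith
  have hh : 0 < h := lt_of_le_of_lt hp hph
  have hpq : p ^ q < h ^ q := rpow_lt_rpow hp hph hq0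
  have hsub : 0 < h ^ q - p ^ q := sub_pos.mpr hpq
  set t : ℝ := (p / h) ^ q with ht
  have ht0 : 0 ≤ t := rpow_nonneg (div_nonneg hp hh.le) q
  have ht1 : t < 1 := by
    have : p / h < 1 := (div_lt_one hh).mpr hph
    simpa using rpow_lt_one (div_nonneg hp hh.le) this hq0
  have htq : t = p ^ q / h ^ q := div_rpow hp hh.le q
  have hfac : h ^ q - p ^ q = h ^ q * (1 - t) := by
    rw [htq]; field_simp
  constructor
  · -- the derivative
    have hinner : HasDerivAt (fun x : ℝ => x ^ q - p ^ q) (q * h ^ (q - 1)) h := by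
      simpa using (hasDerivAt_rpow_const (p := q) (Or.inl hh.ne')).sub_const (p ^ q)
    have houter : HasDerivAt (fun y : ℝ => y ^ (1 / q))
        (1 / q * (h ^ q - p ^ q) ^ (1 / q - 1)) (h ^ q - p ^ q) :=
      hasDerivAt_rpow_const (Or.inl hsub.ne')
    have := houter.comp h hinner
    refine this.congr_deriv ?_
    rw [hfac, mul_rpow (rpow_nonneg hh.le q) (by linarith : (0:ℝ) ≤ 1 - t),
      ← rpow_mul hh.le]
    have h1 : q * (1 / q - 1) = 1 - q := by field_simp
    rw [h1]
    have h2 : h ^ (1 - q) * h ^ (q - 1) = 1 := by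
      rw [← rpow_add hh]; norm_num
    rw [show 1 / q * (h ^ (1 - q) * (1 - t) ^ (1 / q - 1)) * (q * h ^ (q - 1))
        = (1 / q * q) * ((h ^ (1 - q) * h ^ (q - 1)) * (1 - t) ^ (1 / q - 1)) from by ring,
      h2, one_div, inv_mul_cancel₀ hq0.ne']
    ring
  · have hq' : 0 ≤ 1 / q := by positivity
    have hα0 : 0 < 1 - 1 / q := by
      have : 1 / q ≤ 1 / 2 := by
        apply one_div_le_one_div_of_le <;> linarith
      linarith
    have hα1 : 1 - 1 / q ≤ 1 := by linarith
    refine ⟨?_, by positivity⟩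
    set α : ℝ := 1 - 1 / q with hαdef
    have hexp : 1 / q - 1 = -α := by rw [hαdef]; ring
    rw [hexp, rpow_neg (by linarith : (0:ℝ) ≤ 1 - t)]
    have hbern : (1 - t) ^ α ≤ 1 + α * (-t) := by
      have := rpow_one_add_le_one_add_mul_self (s := -t) (by linarith) hα0.le hα1
      rwa [← sub_eq_add_neg] at this
    have hpos : 0 < (1 - t) ^ α := rpow_pos_of_pos (by linarith) α
    have key : (α * t + 1) * (1 - t) ^ α ≤ 1 :=
      calc (α * t + 1) * (1 - t) ^ α ≤ (α * t + 1) * (1 + α * (-t)) := by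
            apply mul_le_mul_of_nonneg_left hbern (by nlinarith)
        _ = 1 - (α * t) ^ 2 := by ring
        _ ≤ 1 := by nlinarith
    have hfin := (le_div_iff₀ hpos).mpr key
    rw [one_div] at hfin
    linarith
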